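/- Suppose V admits a stream function H and the swirls of V have uniformly bounded size M for some M > 0. Let S₁ and S₂ be two distinct cells. Then exactly one of the following holds: (1) S₁ ∩ S₂ = ∂S₁ ∩ ∂S₂; (2) there exists a closed orbit ξ such that S₁ ⊆ R_ξ ⊆ S₂° or S₂ ⊆ R_ξ ⊆ S₁°. -/

import Mathlib

open MeasureTheory Filter Topology Set Metric Bornology

noncomputable section

/-- The plane `ℝ²` with the Euclidean norm. -/
abbrev E2 : Type := EuclideanSpace ℝ (Fin 2)

/-- The vector of `ℝ²` with integer coordinates `k`. -/
def intVec (k : Fin 2 → ℤ) : E2 := WithLp.toLp 2 (fun i => (k i : ℝ))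

/-- `ℤ²`-periodicity of a map on `ℝ²`. -/
def ZPeriodic {α : Type*} (V : E2 → α) : Prop :=
  ∀ (x : E2) (k : Fin 2 → ℤ), V (x + intVec k) = V x

/-- The stagnation set `Γ = {x | V x = 0}`. -/
def Stag (V : E2 → E2) : Set E2 := {x | V x = 0}

/-- `ξ` is an orbit of the flow `V`. -/
def IsOrbit (V : E2 → E2) (ξ : ℝ → E2) : Prop := ∀ t : ℝ, HasDerivAt ξ (V (ξ t)) t

/-- `ξ` is the orbit of `V` passing through `x` at time `0`. -/
def IsOrbitThrough (V : E2 → E2) (ξ : ℝ → E2) (x : E2) : Prop := IsOrbit V ξ ∧ ξ 0 = x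

/-- closed orbit. -/
def IsClosedOrbit (V : E2 → E2) (ξ : ℝ → E2) : Prop :=
  IsOrbit V ξ ∧ ∃ T > (0:ℝ), ξ T = ξ 0

/-- non-contractible periodic orbit: `ξ T − ξ 0 ∈ ℤ² ∖ {0}` for some `T > 0`. -/
def IsNoncontractibleOrbit (V : E2 → E2) (ξ : ℝ → E2) : Prop :=
  IsOrbit V ξ ∧ ∃ T > (0:ℝ), ∃ k : Fin 2 → ℤ, k ≠ 0 ∧ ξ T - ξ 0 = intVec k

/-- an orbit asymptotic to the stagnation set: `dist(ξ t, Γ) → 0` as `t → ±∞`. -/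
def AsympToStag (V : E2 → E2) (ξ : ℝ → E2) : Prop :=
  Tendsto (fun t => infDist (ξ t) (Stag V)) atTop (nhds 0) ∧
  Tendsto (fun t => infDist (ξ t) (Stag V)) atBot (nhds 0)

/-- the closed region enclosed by a curve with image `J`: the complement of the
unbounded connected component of `ℝ² ∖ J`. -/
def encl (J : Set E2) : Set E2 :=
  J ∪ {x | x ∉ J ∧ IsBounded (connectedComponentIn Jᶜ x)}

/-- the swirls (closed orbits) of `V` have size uniformly bounded by `M`. -/
def SwirlBound (V : E2 → E2) (M : ℝ) : Prop :=
  ∀ ξ : ℝ → E2, IsClosedOrbit V ξ → diam (range ξ) ≤ M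

/-- a set is invariant under the flow of `V`. -/
def FlowInvariant (V : E2 → E2) (E : Set E2) : Prop :=
  ∀ x ∈ E, ∀ ξ : ℝ → E2, IsOrbitThrough V ξ x → range ξ ⊆ E

/-- a cell of the flow `V`. -/
def IsCell (V : E2 → E2) (S : Set E2) : Prop :=
  IsClosed S ∧ ∃ ξ : ℕ → ℝ → E2,
    (∀ m, IsClosedOrbit V (ξ m)) ∧
    (∀ m, encl (range (ξ m)) ⊂ encl (range (ξ (m+1)))) ∧
    S = closure (⋃ m, encl (range (ξ m))) ∧
    (frontier S ∩ Stag V).Nonempty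

/-- a maximal cell. -/
def IsMaximalCell (V : E2 → E2) (S : Set E2) : Prop :=
  IsCell V S ∧ ∀ S' : Set E2, IsCell V S' → ¬ S ⊂ S'

/-- `H` is a stream function for `V`: `ℤ²`-periodic, differentiable with Lipschitz
gradient, and `V = (−H_{x₂}, H_{x₁})`. -/
def IsStreamFunction (V : E2 → E2) (H : E2 → ℝ) : Prop :=
  ZPeriodic H ∧ Differentiable ℝ H ∧
  (∃ L : NNReal, LipschitzWith L (fun x => gradient H x)) ∧
  (∀ x : E2, V x 0 = - fderiv ℝ H x (EuclideanSpace.single 1 1) ∧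
             V x 1 = fderiv ℝ H x (EuclideanSpace.single 0 1))

/-- an `A`-admissible control path on `[0,T]`: Lipschitz with
`|γ' + A·V(γ)| ≤ 1` a.e. on `[0,T]`. -/
def IsAdmissible (V : E2 → E2) (A T : ℝ) (γ : ℝ → E2) : Prop :=
  (∃ L : NNReal, LipschitzOnWith L γ (Icc 0 T)) ∧
  ∀ᵐ t ∂(volume : Measure ℝ), t ∈ Icc (0:ℝ) T →
    ∃ g : E2, HasDerivAt γ g t ∧ ‖g + A • V (γ t)‖ ≤ 1

/-- turbulent flame speed via the control representation of the inviscid G-equation. -/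
def sT (V : E2 → E2) (p : E2) (A : ℝ) : ℝ :=
  limsup (fun t : ℝ =>
    (1 / t) * sSup {r : ℝ | ∃ γ : ℝ → E2, IsAdmissible V A t γ ∧ γ 0 = 0 ∧
      r = - (inner ℝ p (γ t) : ℝ)}) atTop

/-- `β₊` associated to the transversal family `η`. -/
def betaPlus (H : E2 → ℝ) (η : ℝ → ℝ → E2) : ℝ :=
  sInf ((fun t => H (η t 1)) '' Icc (-1:ℝ) 1)

/-- `β₋` associated to the transversal family `η`. -/
def betaMinus (H : E2 → ℝ) (η : ℝ → ℝ → E2) : ℝ :=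
  sSup ((fun t => H (η t (-1))) '' Icc (-1:ℝ) 1)

/-- `U_x = Φ((−1,1)×(β₋,β₊))`. -/
def Uset (Φ : ℝ → ℝ → E2) (a b : ℝ) : Set E2 := image2 Φ (Ioo (-1:ℝ) 1) (Ioo a b)

/-- the transversal family `η` through the orbit `ξ`: `η t` is the gradient flow
of `H` with `η t 0 = ξ t`. -/
def IsTransversalFamily (H : E2 → ℝ) (ξ : ℝ → E2) (η : ℝ → ℝ → E2) : Prop :=
  ∀ t : ℝ, η t 0 = ξ t ∧ ∀ s : ℝ, HasDerivAt (η t) (gradient H (η t s)) s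

/-- The defining property of the local coordinate map `Φ` on a rectangle
`T × B`: `Φ t β` is the (unique) point of the transversal curve `η t` at level
`H = β`. -/
def IsPhiMap (H : E2 → ℝ) (η : ℝ → ℝ → E2) (Φ : ℝ → ℝ → E2) (T B : Set ℝ) : Prop :=
  ∀ t ∈ T, ∀ β ∈ B, H (Φ t β) = β ∧ ∃ s : ℝ, Φ t β = η t s


/-! ### Auxiliary lemmas -/

lemma subset_encl (J : Set E2) : J ⊆ encl J := subset_union_left

lemma ccIn_eq_of_mem {Ω : Set E2} {x y : E2} (h : y ∈ connectedComponentIn Ω x) :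
    connectedComponentIn Ω y = connectedComponentIn Ω x := (connectedComponentIn_eq h).symm

lemma frontier_ccIn_subset {Ω : Set E2} (hΩ : IsOpen Ω) (x : E2) :
    frontier (connectedComponentIn Ω x) ⊆ Ωᶜ := by
  intro z hz
  set D := connectedComponentIn Ω x with hD
  have hDopen : IsOpen D := hΩ.connectedComponentIn
  rw [hDopen.frontier_eq] at hz
  intro hzΩ
  have hN : connectedComponentIn Ω z ∈ 𝓝 z := connectedComponentIn_mem_nhds (hΩ.mem_nhds hzΩ)
  obtain ⟨w, hwN, hwD⟩ := mem_closure_iff_nhds.mp hz.1 _ hN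
  have h1 : connectedComponentIn Ω w = connectedComponentIn Ω z := ccIn_eq_of_mem hwN
  have h2 : connectedComponentIn Ω w = D := ccIn_eq_of_mem hwD
  exact hz.2 (h2 ▸ h1 ▸ mem_connectedComponentIn hzΩ)

lemma isClosed_encl {J : Set E2} (hJ : IsClosed J) : IsClosed (encl J) := by
  rw [← isOpen_compl_iff, isOpen_iff_forall_mem_open]
  intro x hx
  have hxJ : x ∉ J := fun h => hx (subset_encl J h)
  have hxb : ¬ IsBounded (connectedComponentIn Jᶜ x) := fun hb => hx (Or.inr ⟨hxJ, hb⟩)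
  refine ⟨connectedComponentIn Jᶜ x, ?_, hJ.isOpen_compl.connectedComponentIn,
    mem_connectedComponentIn hxJ⟩
  intro y hy hyencl
  have hyJ : y ∉ J := connectedComponentIn_subset _ _ hy
  have heq : connectedComponentIn Jᶜ y = connectedComponentIn Jᶜ x := ccIn_eq_of_mem hy
  rcases hyencl with h | ⟨-, hb⟩
  · exact hyJ h
  · exact hxb (heq ▸ hb)

lemma encl_diff_subset_interior {J : Set E2} (hJ : IsClosed J) :
    encl J \ J ⊆ interior (encl J) := by
  intro x hx
  rcases hx with ⟨hxe, hxJ⟩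
  have hxb : IsBounded (connectedComponentIn Jᶜ x) := by
    rcases hxe with h | ⟨-, hb⟩
    · exact absurd h hxJ
    · exact hb
  rw [mem_interior]
  refine ⟨connectedComponentIn Jᶜ x, ?_, hJ.isOpen_compl.connectedComponentIn,
    mem_connectedComponentIn hxJ⟩
  intro y hy
  have hyJ : y ∉ J := connectedComponentIn_subset _ _ hy
  exact Or.inr ⟨hyJ, ccIn_eq_of_mem hy ▸ hxb⟩

lemma exists_unbounded_comp {A : Set E2} (hA : IsBounded A) :
    ∃ x : E2, x ∉ A ∧ ¬ IsBounded (connectedComponentIn Aᶜ x) := by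
  obtain ⟨r, hr⟩ := (isBounded_iff_subset_ball (0 : E2)).mp hA
  set u : E2 := EuclideanSpace.single (0 : Fin 2) (1 : ℝ) with hu
  have hnu : ‖u‖ = 1 := by simp [hu, EuclideanSpace.norm_single]
  set S : Set E2 := (fun t : ℝ => t • u) '' Ici (max r 1 + 1) with hS
  have hnorm : ∀ t : ℝ, t ∈ Ici (max r 1 + 1) → ‖t • u‖ = t := by
    intro t ht
    have ht0 : (0:ℝ) ≤ t := le_trans (by positivity) ht
    rw [norm_smul, hnu, mul_one, Real.norm_eq_abs, abs_of_nonneg ht0]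
  have hSA : S ∩ A = ∅ := by
    ext y; simp only [mem_inter_iff, mem_empty_iff_false, iff_false, not_and]
    rintro ⟨t, ht, rfl⟩ hyA
    have := hr hyA
    rw [mem_ball, dist_zero_right, hnorm t ht] at this
    have : t < max r 1 := lt_of_lt_of_le this (le_max_left _ _)
    linarith [ht.out]
  have hScomp : S ⊆ Aᶜ := by
    intro y hy hyA
    exact absurd (Set.mem_inter hy hyA) (by rw [hSA]; exact notMem_empty y)
  have hSconn : IsPreconnected S := by
    apply IsPreconnected.image isPreconnected_Ici
    exact (continuous_id.smul continuous_const).continuousOn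
  have hSunb : ¬ IsBounded S := by
    intro hb
    obtain ⟨R, hR⟩ := (isBounded_iff_subset_ball (0 : E2)).mp hb
    have hmemI : max r 1 + 1 + |R| + 1 ∈ Ici (max r 1 + 1) := by
      simp only [mem_Ici]; linarith [abs_nonneg R]
    have hmem : (max r 1 + 1 + |R| + 1) • u ∈ S := ⟨_, hmemI, rfl⟩
    have := hR hmem
    rw [mem_ball, dist_zero_right, hnorm _ hmemI] at this
    linarith [le_abs_self R, le_max_right r 1]
  set x : E2 := (max r 1 + 1) • u with hx
  have hxS : x ∈ S := ⟨_, self_mem_Ici, rfl⟩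
  refine ⟨x, fun h => hScomp hxS h, fun hb => hSunb (hb.subset ?_)⟩
  exact hSconn.subset_connectedComponentIn hxS hScomp

lemma not_isBounded_univ_E2 : ¬ IsBounded (univ : Set E2) := by
  obtain ⟨x, -, h⟩ := exists_unbounded_comp (isBounded_empty (α := E2))
  exact fun hb => h (hb.subset (subset_univ _))

/-- A nonempty open set with empty frontier in the plane is everything. -/
lemma clopen_univ {D : Set E2} (hD : IsOpen D) (hfr : frontier D = ∅)
    (hne : D.Nonempty) : D = univ := by
  have hcl : IsClosed D := by
    rw [← closure_eq_iff_isClosed]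
    have h2 := hD.frontier_eq
    rw [hfr] at h2
    exact (diff_eq_empty.mp h2.symm).antisymm subset_closure
  exact IsClopen.eq_univ ⟨hcl, hD⟩ hne

/-- A bounded nonempty open-and-closed set in the plane cannot exist. -/
lemma no_bounded_clopen {D : Set E2} (hD : IsOpen D) (hfr : frontier D = ∅)
    (hne : D.Nonempty) (hb : IsBounded D) : False :=
  not_isBounded_univ_E2 ((clopen_univ hD hfr hne) ▸ hb)

lemma encl_trichotomy {J J' : Set E2}
    (hJc : IsClosed J) (hJb : IsBounded J) (hJconn : IsPreconnected J) (hJne : J.Nonempty)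
    (hJ'c : IsClosed J') (hJ'b : IsBounded J') (hJ'conn : IsPreconnected J') (hJ'ne : J'.Nonempty)
    (hdisj : J ∩ J' = ∅) :
    encl J ∩ encl J' = ∅ ∨ encl J' ⊆ interior (encl J) ∨ encl J ⊆ interior (encl J') := by
  obtain ⟨x₀, hx₀⟩ := hJ'ne
  obtain ⟨y₀, hy₀⟩ := hJne
  have hJsub : J ⊆ J'ᶜ := fun z hz hz' => by
    have : z ∈ J ∩ J' := ⟨hz, hz'⟩
    simp [hdisj] at this
  have hJ'sub : J' ⊆ Jᶜ := fun z hz hz' => by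
    have : z ∈ J ∩ J' := ⟨hz', hz⟩
    simp [hdisj] at this
  set C := connectedComponentIn Jᶜ x₀ with hCdef
  set C' := connectedComponentIn J'ᶜ y₀ with hC'def
  have hJ'C : J' ⊆ C := hJ'conn.subset_connectedComponentIn hx₀ hJ'sub
  have hJC' : J ⊆ C' := hJconn.subset_connectedComponentIn hy₀ hJsub
  -- the component (in Jᶜ) of any point of J' is C
  have fact1 : ∀ z ∈ J', connectedComponentIn Jᶜ z = C := fun z hz => ccIn_eq_of_mem (hJ'C hz)
  have fact2 : ∀ z ∈ J, connectedComponentIn J'ᶜ z = C' := fun z hz => ccIn_eq_of_mem (hJC' hz)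
  -- if a component of Jᶜ meets J' it is C
  have fact3 : ∀ w z : E2, z ∈ connectedComponentIn Jᶜ w → z ∈ J' →
      connectedComponentIn Jᶜ w = C := by
    intro w z hzw hzJ'
    rw [← ccIn_eq_of_mem hzw]
    exact fact1 z hzJ'
  have fact4 : ∀ w z : E2, z ∈ connectedComponentIn J'ᶜ w → z ∈ J →
      connectedComponentIn J'ᶜ w = C' := by
    intro w z hzw hzJ
    rw [← ccIn_eq_of_mem hzw]
    exact fact2 z hzJ
  -- a point of J cannot lie in encl J' when C' is unbounded, etc.
  have factJ : ¬ IsBounded C' → ∀ z ∈ J, z ∉ encl J' := by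
    intro hC' z hz henc
    rcases henc with h | ⟨-, hb⟩
    · exact (hJsub hz) h
    · rw [fact2 z hz] at hb; exact hC' hb
  have factJ' : ¬ IsBounded C → ∀ z ∈ J', z ∉ encl J := by
    intro hC z hz henc
    rcases henc with h | ⟨-, hb⟩
    · exact (hJ'sub hz) h
    · rw [fact1 z hz] at hb; exact hC hb
  by_cases hC : IsBounded C <;> by_cases hC' : IsBounded C'
  · -- both bounded: impossible
    exfalso
    obtain ⟨p, hpA, hpU⟩ := exists_unbounded_comp (hJb.union hJ'b)
    have hpJ : p ∉ J := fun h => hpA (Or.inl h)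
    have hpJ' : p ∉ J' := fun h => hpA (Or.inr h)
    set U := connectedComponentIn Jᶜ p with hUdef
    set U' := connectedComponentIn J'ᶜ p with hU'def
    have hUu : ¬ IsBounded U := fun hb =>
      hpU (hb.subset (by rw [hUdef]; exact connectedComponentIn_mono p (compl_subset_compl.mpr subset_union_left)))
    have hU'u : ¬ IsBounded U' := fun hb =>
      hpU (hb.subset (connectedComponentIn_mono p (compl_subset_compl.mpr subset_union_right)))
    have hUJ' : ∀ z ∈ U, z ∉ J' := by
      intro z hzU hzJ'
      exact hUu (by rw [hUdef, fact3 p z hzU hzJ']; exact hC)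
    have hU'J : ∀ z ∈ U', z ∉ J := by
      intro z hzU hzJ
      exact hU'u (by rw [hU'def, fact4 p z hzU hzJ]; exact hC')
    have hUU' : U ⊆ U' :=
      isPreconnected_connectedComponentIn.subset_connectedComponentIn
        (mem_connectedComponentIn hpJ) (fun z hz => hUJ' z hz)
    have hU'U : U' ⊆ U :=
      isPreconnected_connectedComponentIn.subset_connectedComponentIn
        (mem_connectedComponentIn hpJ') (fun z hz => hU'J z hz)
    have hfr : frontier U = ∅ := by
      have h1 : frontier U ⊆ J := by
        have := frontier_ccIn_subset hJc.isOpen_compl p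
        rwa [compl_compl] at this
      have h2 : frontier U ⊆ J' := by
        have := frontier_ccIn_subset hJ'c.isOpen_compl p
        rw [compl_compl] at this
        rw [hUU'.antisymm hU'U]
        exact this
      rw [← subset_empty_iff, ← hdisj]
      exact subset_inter h1 h2
    have huniv : U = univ :=
      clopen_univ hJc.isOpen_compl.connectedComponentIn hfr
        ⟨p, mem_connectedComponentIn hpJ⟩
    have : y₀ ∈ U := huniv ▸ mem_univ y₀
    exact (connectedComponentIn_subset Jᶜ p this) hy₀
  · -- C bounded, C' unbounded : encl J' ⊆ interior (encl J)
    refine Or.inr (Or.inl ?_)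
    refine subset_trans ?_ (encl_diff_subset_interior hJc)
    intro x hx
    have hxJ : x ∉ J := fun h => factJ hC' x h hx
    refine ⟨?_, hxJ⟩
    rcases hx with h | ⟨hxJ', hb⟩
    · exact Or.inr ⟨hxJ, (fact1 x h) ▸ hC⟩
    · refine Or.inr ⟨hxJ, ?_⟩
      by_contra hD
      have hDJ' : ∀ z ∈ connectedComponentIn Jᶜ x, z ∉ J' := by
        intro z hz hzJ'
        exact hD ((fact3 x z hz hzJ') ▸ hC)
      have : connectedComponentIn Jᶜ x ⊆ connectedComponentIn J'ᶜ x :=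
        isPreconnected_connectedComponentIn.subset_connectedComponentIn
          (mem_connectedComponentIn hxJ) (fun z hz => hDJ' z hz)
      exact hD (hb.subset this)
  · -- C unbounded, C' bounded : encl J ⊆ interior (encl J')
    refine Or.inr (Or.inr ?_)
    refine subset_trans ?_ (encl_diff_subset_interior hJ'c)
    intro x hx
    have hxJ' : x ∉ J' := fun h => factJ' hC x h hx
    refine ⟨?_, hxJ'⟩
    rcases hx with h | ⟨hxJ, hb⟩
    · exact Or.inr ⟨hxJ', (fact2 x h) ▸ hC'⟩
    · refine Or.inr ⟨hxJ', ?_⟩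
      by_contra hD
      have hDJ : ∀ z ∈ connectedComponentIn J'ᶜ x, z ∉ J := by
        intro z hz hzJ
        exact hD ((fact4 x z hz hzJ) ▸ hC')
      have : connectedComponentIn J'ᶜ x ⊆ connectedComponentIn Jᶜ x :=
        isPreconnected_connectedComponentIn.subset_connectedComponentIn
          (mem_connectedComponentIn hxJ') (fun z hz => hDJ z hz)
      exact hD (hb.subset this)
  · -- both unbounded : encl J ∩ encl J' = ∅
    left
    by_contra hne'
    obtain ⟨x, hx1, hx2⟩ := nonempty_iff_ne_empty.mpr hne'
    have hxJ : x ∉ J := fun h => factJ hC' x h hx2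
    have hxJ' : x ∉ J' := fun h => factJ' hC x h hx1
    have hb1 : IsBounded (connectedComponentIn Jᶜ x) :=
      hx1.elim (fun h => absurd h hxJ) (fun h => h.2)
    have hb2 : IsBounded (connectedComponentIn J'ᶜ x) :=
      hx2.elim (fun h => absurd h hxJ') (fun h => h.2)
    have hDJ' : ∀ z ∈ connectedComponentIn Jᶜ x, z ∉ J' := by
      intro z hz hzJ'
      exact hC ((fact3 x z hz hzJ') ▸ hb1)
    have hDJ : ∀ z ∈ connectedComponentIn J'ᶜ x, z ∉ J := by
      intro z hz hzJ
      exact hC' ((fact4 x z hz hzJ) ▸ hb2)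
    have hsub1 : connectedComponentIn Jᶜ x ⊆ connectedComponentIn J'ᶜ x :=
      isPreconnected_connectedComponentIn.subset_connectedComponentIn
        (mem_connectedComponentIn hxJ) (fun z hz => hDJ' z hz)
    have hsub2 : connectedComponentIn J'ᶜ x ⊆ connectedComponentIn Jᶜ x :=
      isPreconnected_connectedComponentIn.subset_connectedComponentIn
        (mem_connectedComponentIn hxJ') (fun z hz => hDJ z hz)
    have hfr : frontier (connectedComponentIn Jᶜ x) = ∅ := by
      have h1 : frontier (connectedComponentIn Jᶜ x) ⊆ J := by
        have := frontier_ccIn_subset hJc.isOpen_compl x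
        rwa [compl_compl] at this
      have h2 : frontier (connectedComponentIn Jᶜ x) ⊆ J' := by
        have := frontier_ccIn_subset hJ'c.isOpen_compl x
        rw [compl_compl] at this
        rw [hsub1.antisymm hsub2]
        exact this
      rw [← subset_empty_iff, ← hdisj]
      exact subset_inter h1 h2
    exact no_bounded_clopen hJc.isOpen_compl.connectedComponentIn hfr
      ⟨x, mem_connectedComponentIn hxJ⟩ hb1
section OrbitLemmas
variable {V : E2 → E2} {K : NNReal}

lemma orbit_unique (hLip : LipschitzWith K V) {f g : ℝ → E2} (hf : IsOrbit V f)
    (hg : IsOrbit V g) {t₀ : ℝ} (heq : f t₀ = g t₀) : f = g := by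
  funext t
  have hmem : ∀ s : ℝ, s ∈ Ioo (min t t₀ - 1) (max t t₀ + 1) → True := fun _ _ => trivial
  have h := ODE_solution_unique_of_mem_Ioo (v := fun _ x => V x) (s := fun _ => (univ : Set E2))
    (K := K) (fun _ _ => hLip.lipschitzOnWith)
    (t₀ := t₀) (a := min t t₀ - 1) (b := max t t₀ + 1)
    ⟨by linarith [min_le_right t t₀], by linarith [le_max_right t t₀]⟩
    (fun s _ => ⟨hf s, mem_univ _⟩) (fun s _ => ⟨hg s, mem_univ _⟩) heq
  exact h ⟨by linarith [min_le_left t t₀], by linarith [le_max_left t t₀]⟩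

lemma orbit_shift (hf : IsOrbit V f) (c : ℝ) : IsOrbit V (fun t => f (t + c)) := by
  intro t
  exact (hf (t + c)).comp_add_const t c

lemma closedOrbit_periodic (hLip : LipschitzWith K V) {ξ : ℝ → E2} {T : ℝ}
    (hξ : IsOrbit V ξ) (hT : ξ T = ξ 0) : Function.Periodic ξ T := by
  have h := orbit_unique hLip (orbit_shift hξ T) hξ (t₀ := 0) (by simpa using hT)
  intro t
  exact congrFun h t

lemma orbit_continuous {ξ : ℝ → E2} (hξ : IsOrbit V ξ) : Continuous ξ :=
  continuous_iff_continuousAt.mpr fun t => (hξ t).continuousAt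

lemma closedOrbit_range_compact (hLip : LipschitzWith K V) {ξ : ℝ → E2}
    (hξ : IsClosedOrbit V ξ) : IsCompact (range ξ) := by
  obtain ⟨T, hT, hTeq⟩ := hξ.2
  have hper := closedOrbit_periodic hLip hξ.1 hTeq
  have : range ξ = ξ '' Icc 0 (0 + T) := (hper.image_Icc hT 0).symm
  rw [this]
  exact (isCompact_Icc).image (orbit_continuous hξ.1)

lemma orbit_range_eq_of_inter (hLip : LipschitzWith K V) {ξ ζ : ℝ → E2}
    (hξ : IsOrbit V ξ) (hζ : IsOrbit V ζ) (h : (range ξ ∩ range ζ).Nonempty) :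
    range ξ = range ζ := by
  obtain ⟨y, ⟨a, ha⟩, ⟨b, hb⟩⟩ := h
  have key : ξ = fun t => ζ (t + (b - a)) := by
    apply orbit_unique hLip hξ (orbit_shift hζ (b - a)) (t₀ := a)
    simp [ha, hb]
  rw [key]
  ext z
  constructor
  · rintro ⟨t, rfl⟩; exact ⟨t + (b - a), rfl⟩
  · rintro ⟨t, rfl⟩; exact ⟨t - (b - a), by simp⟩
/-- Pairwise comparison of the enclosures of two closed orbits whose
enclosures intersect. -/
lemma encl_comparison (hLip : LipschitzWith K V) {ξ ζ : ℝ → E2}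
    (hξ : IsClosedOrbit V ξ) (hζ : IsClosedOrbit V ζ)
    (h : (encl (range ξ) ∩ encl (range ζ)).Nonempty) :
    encl (range ξ) ⊆ encl (range ζ) ∨ encl (range ζ) ⊆ encl (range ξ) := by
  have hcξ := closedOrbit_range_compact hLip hξ
  have hcζ := closedOrbit_range_compact hLip hζ
  by_cases hint : (range ξ ∩ range ζ).Nonempty
  · rw [orbit_range_eq_of_inter hLip hξ.1 hζ.1 hint]
    exact Or.inl subset_rfl
  · have hdisj : range ξ ∩ range ζ = ∅ := not_nonempty_iff_eq_empty.mp hint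
    rcases encl_trichotomy hcξ.isClosed hcξ.isBounded
      (isPreconnected_range (orbit_continuous hξ.1)) (range_nonempty ξ)
      hcζ.isClosed hcζ.isBounded
      (isPreconnected_range (orbit_continuous hζ.1)) (range_nonempty ζ) hdisj with
      hc | hc | hc
    · rw [hc] at h; exact absurd h (by simp)
    · exact Or.inr (hc.trans interior_subset)
    · exact Or.inl (hc.trans interior_subset)

/-- Strict version: in a chain, each enclosure lies in the interior of the next. -/
lemma encl_subset_interior_of_ssubset (hLip : LipschitzWith K V) {ξ ζ : ℝ → E2}
    (hξ : IsClosedOrbit V ξ) (hζ : IsClosedOrbit V ζ)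
    (h : encl (range ξ) ⊂ encl (range ζ)) :
    encl (range ξ) ⊆ interior (encl (range ζ)) := by
  have hcξ := closedOrbit_range_compact hLip hξ
  have hcζ := closedOrbit_range_compact hLip hζ
  by_cases hint : (range ξ ∩ range ζ).Nonempty
  · exact absurd (by rw [orbit_range_eq_of_inter hLip hξ.1 hζ.1 hint]) h.ne
  · have hdisj : range ξ ∩ range ζ = ∅ := not_nonempty_iff_eq_empty.mp hint
    rcases encl_trichotomy hcξ.isClosed hcξ.isBounded
      (isPreconnected_range (orbit_continuous hξ.1)) (range_nonempty ξ)
      hcζ.isClosed hcζ.isBounded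
      (isPreconnected_range (orbit_continuous hζ.1)) (range_nonempty ζ) hdisj with
      hc | hc | hc
    · exfalso
      obtain ⟨y, hy⟩ := (range_nonempty ξ).mono (subset_encl (range ξ))
      have : y ∈ encl (range ξ) ∩ encl (range ζ) := ⟨hy, h.subset hy⟩
      rw [hc] at this; exact this
    · exact absurd ((hc.trans interior_subset).antisymm h.subset) (by
        intro he; exact h.ne he.symm)
    · exact hc

/-- Key lemma: if the interior of one cell meets another cell, then one of the
chain orbits encloses one cell inside the interior of the other. -/
lemma cells_key (hLip : LipschitzWith K V) {S₁ S₂ : Set E2}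
    (h1 : IsCell V S₁) (h2 : IsCell V S₂) (hne : S₁ ≠ S₂)
    {x : E2} (hx1 : x ∈ interior S₁) (hx2 : x ∈ S₂) :
    ∃ ξ : ℝ → E2, IsClosedOrbit V ξ ∧
      ((S₁ ⊆ encl (range ξ) ∧ encl (range ξ) ⊆ interior S₂) ∨
       (S₂ ⊆ encl (range ξ) ∧ encl (range ξ) ⊆ interior S₁)) := by
  obtain ⟨hS₁cl, ξA, hξAorb, hξAchain, hS₁eq, -⟩ := h1
  obtain ⟨hS₂cl, ξB, hξBorb, hξBchain, hS₂eq, -⟩ := h2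
  set R1 : ℕ → Set E2 := fun k => encl (range (ξA k)) with hR1
  set R2 : ℕ → Set E2 := fun m => encl (range (ξB m)) with hR2
  have hR1mono : Monotone R1 := monotone_nat_of_le_succ fun k => (hξAchain k).subset
  have hR2mono : Monotone R2 := monotone_nat_of_le_succ fun m => (hξBchain m).subset
  have hR1int : ∀ k, R1 k ⊆ interior (R1 (k+1)) := fun k =>
    encl_subset_interior_of_ssubset hLip (hξAorb k) (hξAorb (k+1)) (hξAchain k)
  have hR2int : ∀ m, R2 m ⊆ interior (R2 (m+1)) := fun m =>
    encl_subset_interior_of_ssubset hLip (hξBorb m) (hξBorb (m+1)) (hξBchain m)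
  have hR1S : ∀ k, R1 k ⊆ S₁ := fun k => by
    rw [hS₁eq]; exact (subset_iUnion (fun k => R1 k) k).trans subset_closure
  have hR2S : ∀ m, R2 m ⊆ S₂ := fun m => by
    rw [hS₂eq]; exact (subset_iUnion (fun m => R2 m) m).trans subset_closure
  have hR1intS : ∀ k, R1 k ⊆ interior S₁ := fun k =>
    (hR1int k).trans (interior_mono (hR1S (k+1)))
  have hR2intS : ∀ m, R2 m ⊆ interior S₂ := fun m =>
    (hR2int m).trans (interior_mono (hR2S (m+1)))
  -- find a common point of some R1 k₀ and R2 m₀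
  obtain ⟨y, hyS₁, hyR2⟩ : ∃ y, y ∈ interior S₁ ∧ y ∈ ⋃ m, R2 m := by
    have hx2' : x ∈ closure (⋃ m, R2 m) := by rw [← hS₂eq]; exact hx2
    obtain ⟨y, hy1, hy2⟩ := mem_closure_iff.mp hx2' (interior S₁) isOpen_interior hx1
    exact ⟨y, hy1, hy2⟩
  obtain ⟨m₁, hym⟩ := mem_iUnion.mp hyR2
  have hyO : y ∈ interior S₁ ∩ interior (R2 (m₁+1)) := ⟨hyS₁, hR2int m₁ hym⟩
  have hyS₁' : y ∈ closure (⋃ k, R1 k) := by rw [← hS₁eq]; exact interior_subset hyS₁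
  obtain ⟨z, hz1, hz2⟩ := mem_closure_iff.mp hyS₁'
    (interior S₁ ∩ interior (R2 (m₁+1))) (isOpen_interior.inter isOpen_interior) hyO
  obtain ⟨k₀, hzk⟩ := mem_iUnion.mp hz2
  set m₀ := m₁ + 1 with hm₀
  have hzm : z ∈ R2 m₀ := interior_subset hz1.2
  -- pairwise comparison for large indices
  have hcomp : ∀ k m, k₀ ≤ k → m₀ ≤ m → R1 k ⊆ R2 m ∨ R2 m ⊆ R1 k := fun k m hk hm =>
    encl_comparison hLip (hξAorb k) (hξBorb m)
      ⟨z, hR1mono hk hzk, hR2mono hm hzm⟩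
  by_cases hI : ∃ k, ∀ m, R2 m ⊆ R1 k
  · obtain ⟨k, hk⟩ := hI
    refine ⟨ξA k, hξAorb k, Or.inr ⟨?_, hR1intS k⟩⟩
    rw [hS₂eq]
    exact closure_minimal (iUnion_subset hk)
      (isClosed_encl (closedOrbit_range_compact hLip (hξAorb k)).isClosed)
  by_cases hI' : ∃ m, ∀ k, R1 k ⊆ R2 m
  · obtain ⟨m, hm⟩ := hI'
    refine ⟨ξB m, hξBorb m, Or.inl ⟨?_, hR2intS m⟩⟩
    rw [hS₁eq]
    exact closure_minimal (iUnion_subset hm)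
      (isClosed_encl (closedOrbit_range_compact hLip (hξBorb m)).isClosed)
  exfalso
  push_neg at hI hI'
  apply hne
  have hsub12 : S₁ ⊆ S₂ := by
    rw [hS₁eq]
    refine closure_minimal (iUnion_subset fun k => ?_) hS₂cl
    obtain ⟨m, hm⟩ := hI (max k k₀)
    set m' := max m m₀ with hm'
    have hmm' : ¬ R2 m' ⊆ R1 (max k k₀) := fun hs => hm ((hR2mono (le_max_left m m₀)).trans hs)
    rcases hcomp (max k k₀) m' (le_max_right k k₀) (le_max_right m m₀) with hc | hc
    · exact (hR1mono (le_max_left k k₀)).trans (hc.trans (hR2S m'))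
    · exact absurd hc hmm'
  have hsub21 : S₂ ⊆ S₁ := by
    rw [hS₂eq]
    refine closure_minimal (iUnion_subset fun m => ?_) hS₁cl
    obtain ⟨k, hk⟩ := hI' (max m m₀)
    set k' := max k k₀ with hk'
    have hkk' : ¬ R1 k' ⊆ R2 (max m m₀) := fun hs => hk ((hR1mono (le_max_left k k₀)).trans hs)
    rcases hcomp k' (max m m₀) (le_max_right k k₀) (le_max_right m m₀) with hc | hc
    · exact absurd hc hkk'
    · exact (hR2mono (le_max_left m m₀)).trans (hc.trans (hR1S k'))
  exact hsub12.antisymm hsub21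
end OrbitLemmas

/-- Corollary 2.7. For two distinct cells `S₁, S₂`, exactly one holds:
(1) `S₁ ∩ S₂ = ∂S₁ ∩ ∂S₂`; (2) there is a closed orbit `ξ` with `S₁ ⊆ R_ξ ⊆ S₂°` or
`S₂ ⊆ R_ξ ⊆ S₁°`. -/
theorem statement11
    (V : E2 → E2) (K : NNReal) (hLip : LipschitzWith K V) (hper : ZPeriodic V)
    (H : E2 → ℝ) (hH : IsStreamFunction V H)
    (M : ℝ) (hM : 0 < M) (hswirl : SwirlBound V M)
    (S₁ S₂ : Set E2) (h1 : IsCell V S₁) (h2 : IsCell V S₂) (hne : S₁ ≠ S₂) :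
    Xor'
      (S₁ ∩ S₂ = frontier S₁ ∩ frontier S₂)
      (∃ ξ : ℝ → E2, IsClosedOrbit V ξ ∧
        ((S₁ ⊆ encl (range ξ) ∧ encl (range ξ) ⊆ interior S₂) ∨
         (S₂ ⊆ encl (range ξ) ∧ encl (range ξ) ⊆ interior S₁))) := by
  by_cases hA : S₁ ∩ S₂ = frontier S₁ ∩ frontier S₂
  · refine Or.inl ⟨hA, ?_⟩
    rintro ⟨ξ, hξ, hc⟩
    rcases hc with ⟨hsub, hint⟩ | ⟨hsub, hint⟩
    · obtain ⟨p, hp⟩ := h1.2.choose_spec.2.2.2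
      replace hp := hp.1
      have hpS₁ : p ∈ S₁ := h1.1.closure_eq ▸ frontier_subset_closure hp
      have hpS₂ : p ∈ interior S₂ := hint (hsub hpS₁)
      have hmem : p ∈ S₁ ∩ S₂ := ⟨hpS₁, interior_subset hpS₂⟩
      rw [hA] at hmem
      exact ((self_diff_frontier S₂).symm ▸ hpS₂ : p ∈ S₂ \ frontier S₂).2 hmem.2
    · obtain ⟨p, hp⟩ := h2.2.choose_spec.2.2.2
      replace hp := hp.1
      have hpS₂ : p ∈ S₂ := h2.1.closure_eq ▸ frontier_subset_closure hp
      have hpS₁ : p ∈ interior S₁ := hint (hsub hpS₂)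
      have hmem : p ∈ S₁ ∩ S₂ := ⟨interior_subset hpS₁, hpS₂⟩
      rw [hA] at hmem
      exact ((self_diff_frontier S₁).symm ▸ hpS₁ : p ∈ S₁ \ frontier S₁).2 hmem.1
  · refine Or.inr ⟨?_, hA⟩
    have hfsub : frontier S₁ ∩ frontier S₂ ⊆ S₁ ∩ S₂ :=
      inter_subset_inter (h1.1.frontier_subset) (h2.1.frontier_subset)
    have hnsub : ¬ (S₁ ∩ S₂ ⊆ frontier S₁ ∩ frontier S₂) := fun h => hA (h.antisymm hfsub)
    obtain ⟨x, hx, hxn⟩ := not_subset.mp hnsub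
    have hxn' : x ∉ frontier S₁ ∨ x ∉ frontier S₂ := by
      by_contra hcon
      push_neg at hcon
      exact hxn ⟨hcon.1, hcon.2⟩
    rcases hxn' with hxf | hxf
    · have hxint : x ∈ interior S₁ :=
        (self_diff_frontier S₁) ▸ (⟨hx.1, hxf⟩ : x ∈ S₁ \ frontier S₁)
      exact cells_key hLip h1 h2 hne hxint hx.2
    · have hxint : x ∈ interior S₂ :=
        (self_diff_frontier S₂) ▸ (⟨hx.2, hxf⟩ : x ∈ S₂ \ frontier S₂)
      obtain ⟨ξ, hξ, hc⟩ := cells_key hLip h2 h1 hne.symm hxint hx.1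
      exact ⟨ξ, hξ, hc.symm⟩


end
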